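/- For probability distributions p, q on a finite set with all entries strictly positive, Σ_z (p(z) - q(z)) log(p(z)/q(z)) ≤ Σ_z (p(z) - q(z))² / min(p(z), q(z)). -/
import Mathlib


open scoped BigOperators

lemma pointwise_kl_chi {a b : ℝ} (ha : 0 < a) (hb : 0 < b) :
    (a - b) * Real.log (a / b) ≤ (a - b) ^ 2 / min a b := by
  rcases le_total a b with h | h
  · rw [min_eq_left h]
    have hlog : Real.log (b / a) ≤ b / a - 1 := Real.log_le_sub_one_of_pos (by positivity)
    have h1 : (a - b) * Real.log (a / b) = (b - a) * Real.log (b / a) := by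
      rw [Real.log_div hb.ne' ha.ne', Real.log_div ha.ne' hb.ne']; ring
    rw [h1]
    have h2 : (b - a) * Real.log (b / a) ≤ (b - a) * ((b - a) / a) := by
      apply mul_le_mul_of_nonneg_left _ (by linarith)
      have : b / a - 1 = (b - a) / a := by field_simp
      linarith [hlog, this ▸ hlog]
    calc (b - a) * Real.log (b / a) ≤ (b - a) * ((b - a) / a) := h2
      _ = (a - b) ^ 2 / a := by ring
  · rw [min_eq_right h]
    have hlog : Real.log (a / b) ≤ a / b - 1 := Real.log_le_sub_one_of_pos (by positivity)
    have h2 : (a - b) * Real.log (a / b) ≤ (a - b) * ((a - b) / b) := by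
      apply mul_le_mul_of_nonneg_left _ (by linarith)
      have : a / b - 1 = (a - b) / b := by field_simp
      linarith [this ▸ hlog]
    calc (a - b) * Real.log (a / b) ≤ (a - b) * ((a - b) / b) := h2
      _ = (a - b) ^ 2 / b := by ring

theorem symmetrized_kl_le_chi (Z : Type*) [Fintype Z] (p q : Z → ℝ)
    (hp : ∀ z, 0 < p z) (hq : ∀ z, 0 < q z)
    (hp1 : ∑ z, p z = 1) (hq1 : ∑ z, q z = 1) :
    ∑ z, (p z - q z) * Real.log (p z / q z) ≤
      ∑ z, (p z - q z) ^ 2 / min (p z) (q z) := by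
  exact Finset.sum_le_sum fun z _ => pointwise_kl_chi (hp z) (hq z)
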